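/- If G is a graph containing no K_3 and no K_{2,3} as a subgraph, then ex*(G, P_4) ≤ (3/2)·|V(G)|, i.e. 2·ex*(G, P_4) ≤ 3·|V(G)|. -/

import Mathlib

open SimpleGraph

/-- An edge coloring is proper on `H` if distinct edges of `H` sharing a vertex
receive different colors. -/
def IsProperEdgeColoring {V : Type*} (H : SimpleGraph V) (c : Sym2 V → ℕ) : Prop :=
  ∀ ⦃e₁ : Sym2 V⦄, e₁ ∈ H.edgeSet → ∀ ⦃e₂ : Sym2 V⦄, e₂ ∈ H.edgeSet →
    e₁ ≠ e₂ → (∃ v, v ∈ e₁ ∧ v ∈ e₂) → c e₁ ≠ c e₂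

/-- The graph `H`, edge colored by `c`, contains a rainbow copy of `F`:
there is an (injective) copy of `F` in `H` all of whose edges receive
pairwise distinct colors. -/
def HasRainbowCopy {V W : Type*} (H : SimpleGraph V) (c : Sym2 V → ℕ)
    (F : SimpleGraph W) : Prop :=
  ∃ f : W ↪ V, (∀ ⦃a b : W⦄, F.Adj a b → H.Adj (f a) (f b)) ∧
    ∀ ⦃a b a' b' : W⦄, F.Adj a b → F.Adj a' b' → s(a, b) ≠ s(a', b') →
      c s(f a, f b) ≠ c s(f a', f b')

/-- `H` admits a proper edge coloring with no rainbow copy of `F`. -/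
def RainbowFree {V W : Type*} (H : SimpleGraph V) (F : SimpleGraph W) : Prop :=
  ∃ c : Sym2 V → ℕ, IsProperEdgeColoring H c ∧ ¬ HasRainbowCopy H c F

/-- The rainbow extremal number `ex*(G,F)`: the maximum number of edges of a
subgraph `H` of `G` admitting a proper edge coloring with no rainbow copy of `F`. -/
noncomputable def rainbowExtremalNumber {V W : Type*} [Fintype V]
    (G : SimpleGraph V) (F : SimpleGraph W) : ℕ :=
  sSup {m | ∃ H : SimpleGraph V, H ≤ G ∧ RainbowFree H F ∧ m = H.edgeSet.ncard}

/-- The minimum degree of a subgraph, taken over its own vertex set. -/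
noncomputable def subMinDegree {V : Type*} {G : SimpleGraph V} (H : G.Subgraph) : ℕ :=
  sInf {d | ∃ v ∈ H.verts, d = (H.neighborSet v).ncard}

/-- `δ*(G,F)`: the maximum of the minimum degree over all subgraphs `H` of `G`
admitting a proper edge coloring with no rainbow copy of `F`. -/
noncomputable def rainbowMinDegree {V W : Type*} [Fintype V]
    (G : SimpleGraph V) (F : SimpleGraph W) : ℕ :=
  sSup {m | ∃ H : G.Subgraph, RainbowFree H.spanningCoe F ∧ m = subMinDegree H}

/-- The `n`-dimensional hypercube graph `Q_n`. -/
def cubeGraph (n : ℕ) : SimpleGraph (Fin n → Bool) where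
  Adj x y := {i | x i ≠ y i}.ncard = 1
  symm := by
    constructor
    intro x y h
    show {i | y i ≠ x i}.ncard = 1
    have hs : {i | y i ≠ x i} = {i | x i ≠ y i} := by ext i; simp [ne_comm]
    rw [hs]; exact h
  loopless := by
    constructor
    intro x h
    simp at h

/-- The star `K_{1,k}` with `k` edges. -/
def starGraph (k : ℕ) : SimpleGraph (Fin (k + 1)) where
  Adj i j := i ≠ j ∧ (i = 0 ∨ j = 0)
  symm := by constructor; intro i j h; exact ⟨h.1.symm, h.2.symm⟩
  loopless := by constructor; intro i h; exact h.1 rfl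

/-- `G` contains a copy of `F` as a subgraph. -/
def ContainsCopy {V W : Type*} (G : SimpleGraph V) (F : SimpleGraph W) : Prop :=
  ∃ f : W ↪ V, ∀ ⦃a b : W⦄, F.Adj a b → G.Adj (f a) (f b)

section RB

variable {V : Type*} {H : SimpleGraph V} {c : Sym2 V → ℕ}

lemma cinj (hpc : IsProperEdgeColoring H c) {v x y : V} (hx : H.Adj v x) (hy : H.Adj v y)
    (hxy : x ≠ y) : c s(v, x) ≠ c s(v, y) := by
  apply hpc (H.mem_edgeSet.2 hx) (H.mem_edgeSet.2 hy)
  · intro h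
    rw [Sym2.eq_iff] at h
    rcases h with ⟨-, h⟩ | ⟨h1, h2⟩
    · exact hxy h
    · exact hxy (h2.trans h1)
  · exact ⟨v, by simp, by simp⟩

lemma no_rainbow_path (hpc : IsProperEdgeColoring H c)
    (hnr : ¬ HasRainbowCopy H c (SimpleGraph.pathGraph 5))
    {p0 p1 p2 p3 p4 : V}
    (h01 : H.Adj p0 p1) (h12 : H.Adj p1 p2) (h23 : H.Adj p2 p3) (h34 : H.Adj p3 p4)
    (n02 : p0 ≠ p2) (n03 : p0 ≠ p3) (n04 : p0 ≠ p4) (n13 : p1 ≠ p3) (n14 : p1 ≠ p4)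
    (n24 : p2 ≠ p4)
    (d02 : c s(p0, p1) ≠ c s(p2, p3)) (d03 : c s(p0, p1) ≠ c s(p3, p4))
    (d13 : c s(p1, p2) ≠ c s(p3, p4)) : False := by
  have n01 := h01.ne
  have n12 := h12.ne
  have n23 := h23.ne
  have n34 := h34.ne
  -- adjacent edge colors are distinct by properness
  have cadj : ∀ {a u b : V}, H.Adj a u → H.Adj u b → a ≠ b → c s(a, u) ≠ c s(u, b) := by
    intro a u b ha hb hab
    apply hpc (H.mem_edgeSet.2 ha) (H.mem_edgeSet.2 hb)
    · intro h
      rw [Sym2.eq_iff] at h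
      rcases h with ⟨h1, -⟩ | ⟨h1, -⟩
      · exact H.irrefl (h1 ▸ ha)
      · exact hab h1
    · exact ⟨u, by simp, by simp⟩
  have d01 : c s(p0, p1) ≠ c s(p1, p2) := cadj h01 h12 n02
  have d12 : c s(p1, p2) ≠ c s(p2, p3) := cadj h12 h23 n13
  have d23 : c s(p2, p3) ≠ c s(p3, p4) := cadj h23 h34 n24
  apply hnr
  set g : Fin 5 → V := ![p0, p1, p2, p3, p4] with hg
  have ginj : Function.Injective g := by
    intro i j hij
    fin_cases i <;> fin_cases j <;>
      first
        | rfl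
        | exact absurd hij n01 | exact absurd hij n01.symm
        | exact absurd hij n02 | exact absurd hij n02.symm
        | exact absurd hij n03 | exact absurd hij n03.symm
        | exact absurd hij n04 | exact absurd hij n04.symm
        | exact absurd hij n12 | exact absurd hij n12.symm
        | exact absurd hij n13 | exact absurd hij n13.symm
        | exact absurd hij n14 | exact absurd hij n14.symm
        | exact absurd hij n23 | exact absurd hij n23.symm
        | exact absurd hij n24 | exact absurd hij n24.symm
        | exact absurd hij n34 | exact absurd hij n34.symm
  have hsel : ∀ a b : Fin 5, (SimpleGraph.pathGraph 5).Adj a b →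
      (s(a, b) = s(0, 1) ∧ c s(g a, g b) = c s(p0, p1)) ∨
      (s(a, b) = s(1, 2) ∧ c s(g a, g b) = c s(p1, p2)) ∨
      (s(a, b) = s(2, 3) ∧ c s(g a, g b) = c s(p2, p3)) ∨
      (s(a, b) = s(3, 4) ∧ c s(g a, g b) = c s(p3, p4)) := by
    intro a b hab
    rw [SimpleGraph.pathGraph_adj] at hab
    fin_cases a <;> fin_cases b <;>
      first
        | exact absurd hab (by decide)
        | exact Or.inl ⟨by decide, by simp [hg]; try rw [Sym2.eq_swap]⟩
        | exact Or.inr (Or.inl ⟨by decide, by simp [hg]; try rw [Sym2.eq_swap]⟩)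
        | exact Or.inr (Or.inr (Or.inl ⟨by decide, by simp [hg]; try rw [Sym2.eq_swap]⟩))
        | exact Or.inr (Or.inr (Or.inr ⟨by decide, by simp [hg]; try rw [Sym2.eq_swap]⟩))
  refine ⟨⟨g, ginj⟩, ?_, ?_⟩
  · intro a b hab
    rw [SimpleGraph.pathGraph_adj] at hab
    fin_cases a <;> fin_cases b <;>
      first
        | exact absurd hab (by decide)
        | exact h01 | exact h01.symm | exact h12 | exact h12.symm
        | exact h23 | exact h23.symm | exact h34 | exact h34.symm
  · intro a b a' b' hab hab' hne
    simp only [Function.Embedding.coeFn_mk]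
    rcases hsel a b hab with ⟨he1, hc1⟩ | ⟨he1, hc1⟩ | ⟨he1, hc1⟩ | ⟨he1, hc1⟩ <;>
      rcases hsel a' b' hab' with ⟨he2, hc2⟩ | ⟨he2, hc2⟩ | ⟨he2, hc2⟩ | ⟨he2, hc2⟩ <;>
      rw [hc1, hc2] <;>
      first
        | exact absurd (he1.trans he2.symm) hne
        | exact d01 | exact d01.symm | exact d02 | exact d02.symm
        | exact d03 | exact d03.symm | exact d12 | exact d12.symm
        | exact d13 | exact d13.symm | exact d23 | exact d23.symm

/-- The key consequence of having no rainbow `P₅`, for paths `x - u - v - u' - y`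
through a common center `v`. -/
lemma star' (hpc : IsProperEdgeColoring H c)
    (hnr : ¬ HasRainbowCopy H c (SimpleGraph.pathGraph 5))
    (hT : ∀ {x y z : V}, H.Adj x y → H.Adj y z → H.Adj x z → False)
    {v u u' x y : V} (hu : H.Adj v u) (hu' : H.Adj v u') (huu' : u ≠ u')
    (hx : H.Adj u x) (hxv : x ≠ v) (hy : H.Adj u' y) (hyv : y ≠ v) (hxy : x ≠ y) :
    c s(u, x) = c s(v, u') ∨ c s(u', y) = c s(v, u) ∨ c s(u, x) = c s(u', y) := by
  by_contra hcon
  push_neg at hcon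
  obtain ⟨d1, d2, d3⟩ := hcon
  have n03 : x ≠ u' := by rintro rfl; exact hT hu hx hu'
  have n14 : u ≠ y := by rintro rfl; exact hT hu' hy hu
  have exu : s(x, u) = s(u, x) := Sym2.eq_swap
  have exv : s(u, v) = s(v, u) := Sym2.eq_swap
  refine no_rainbow_path hpc hnr hx.symm hu.symm hu' hy hxv n03 hxy huu' n14 hyv.symm ?_ ?_ ?_
  · rw [exu]; exact d1
  · rw [exu]; exact d3
  · rw [exv]
    intro h; exact d2 h.symm

variable [Fintype V] [DecidableRel H.Adj]

/-- A vertex of degree at least 3 has two distinct neighbors avoiding a given vertex. -/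
lemma two_nbrs {u : V} (hd : 3 ≤ H.degree u) (v : V) :
    ∃ x y, H.Adj u x ∧ H.Adj u y ∧ x ≠ v ∧ y ≠ v ∧ x ≠ y := by
  classical
  have hcard : 2 ≤ ((H.neighborFinset u).erase v).card := by
    have h1 : H.degree u - 1 ≤ ((H.neighborFinset u).erase v).card :=
      Finset.pred_card_le_card_erase
    omega
  obtain ⟨x, hx, y, hy, hxy⟩ := Finset.one_lt_card.mp hcard
  rw [Finset.mem_erase, SimpleGraph.mem_neighborFinset] at hx hy
  exact ⟨x, y, hx.2, hy.2, hx.1, hy.1, hxy⟩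

/-- A vertex of degree at least 4 has two distinct neighbors avoiding a given vertex
and a given color. -/
lemma pick2 (hpc : IsProperEdgeColoring H c) {v : V} (h4 : 4 ≤ H.degree v) (u : V) (col : ℕ) :
    ∃ x y, H.Adj v x ∧ H.Adj v y ∧ x ≠ u ∧ y ≠ u ∧ x ≠ y ∧
      c s(v, x) ≠ col ∧ c s(v, y) ≠ col := by
  classical
  set e := (H.neighborFinset v).erase u with he
  have hecard : 3 ≤ e.card := by
    have h1 : H.degree v - 1 ≤ e.card := Finset.pred_card_le_card_erase
    omega
  have hbad : (e.filter (fun x => c s(v, x) = col)).card ≤ 1 := by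
    apply Finset.card_le_one.mpr
    intro x hx y hy
    rw [Finset.mem_filter, Finset.mem_erase, SimpleGraph.mem_neighborFinset] at hx hy
    by_contra hxy
    exact cinj hpc hx.1.2 hy.1.2 hxy (hx.2.trans hy.2.symm)
  have hsplit := Finset.card_filter_add_card_filter_not
    (s := e) (p := fun x => c s(v, x) = col)
  have hgood : 2 ≤ (e.filter (fun x => ¬ c s(v, x) = col)).card := by omega
  obtain ⟨x, hx, y, hy, hxy⟩ := Finset.one_lt_card.mp hgood
  rw [Finset.mem_filter, Finset.mem_erase, SimpleGraph.mem_neighborFinset] at hx hy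
  exact ⟨x, y, hx.1.2, hy.1.2, hx.1.1, hy.1.1, hxy, hx.2, hy.2⟩

lemma L1 (hpc : IsProperEdgeColoring H c)
    (hnr : ¬ HasRainbowCopy H c (SimpleGraph.pathGraph 5))
    (hT : ∀ {x y z : V}, H.Adj x y → H.Adj y z → H.Adj x z → False)
    (hK : ∀ {u u' w₁ w₂ w₃ : V}, u ≠ u' → w₁ ≠ w₂ → w₁ ≠ w₃ → w₂ ≠ w₃ →
      H.Adj u w₁ → H.Adj u w₂ → H.Adj u w₃ → H.Adj u' w₁ → H.Adj u' w₂ → H.Adj u' w₃ → False)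
    {v u u' : V} (hu : H.Adj v u) (hu' : H.Adj v u') (huu' : u ≠ u')
    (hdu : 3 ≤ H.degree u) (hdu' : 3 ≤ H.degree u') :
    (∃ x, H.Adj u' x ∧ x ≠ v ∧ c s(u', x) = c s(v, u)) ∨
    (∃ x, H.Adj u x ∧ x ≠ v ∧ c s(u, x) = c s(v, u')) := by
  by_contra hcon
  push_neg at hcon
  obtain ⟨h1, h2⟩ := hcon
  obtain ⟨x1, x2, hx1, hx2, hx1v, hx2v, hx12⟩ := two_nbrs hdu v
  obtain ⟨y1, y2, hy1, hy2, hy1v, hy2v, hy12⟩ := two_nbrs hdu' v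
  have key : ∀ x y, H.Adj u x → x ≠ v → H.Adj u' y → y ≠ v → x ≠ y →
      c s(u, x) = c s(u', y) := by
    intro x y hx hxv hy hyv hxy
    rcases star' hpc hnr hT hu hu' huu' hx hxv hy hyv hxy with h | h | h
    · exact absurd h (h2 x hx hxv)
    · exact absurd h (h1 y hy hyv)
    · exact h
  have hcomm : ¬ (H.Adj u' x1 ∧ H.Adj u' x2) := by
    rintro ⟨ha1, ha2⟩
    exact hK huu' hx1v.symm hx2v.symm hx12 hu.symm hx1 hx2 hu'.symm ha1 ha2
  by_cases hA : x1 ≠ y1 ∧ x1 ≠ y2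
  · have e1 := key x1 y1 hx1 hx1v hy1 hy1v hA.1
    have e2 := key x1 y2 hx1 hx1v hy2 hy2v hA.2
    exact cinj hpc hy1 hy2 hy12 (e1.symm.trans e2)
  by_cases hB : x2 ≠ y1 ∧ x2 ≠ y2
  · have e1 := key x2 y1 hx2 hx2v hy1 hy1v hB.1
    have e2 := key x2 y2 hx2 hx2v hy2 hy2v hB.2
    exact cinj hpc hy1 hy2 hy12 (e1.symm.trans e2)
  · have hA' : x1 = y1 ∨ x1 = y2 := by
      rcases not_and_or.mp hA with h | h
      · exact Or.inl (not_not.mp h)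
      · exact Or.inr (not_not.mp h)
    have hB' : x2 = y1 ∨ x2 = y2 := by
      rcases not_and_or.mp hB with h | h
      · exact Or.inl (not_not.mp h)
      · exact Or.inr (not_not.mp h)
    apply hcomm
    constructor
    · rcases hA' with h | h
      · exact h.symm ▸ hy1
      · exact h.symm ▸ hy2
    · rcases hB' with h | h
      · exact h.symm ▸ hy1
      · exact h.symm ▸ hy2

/-- No vertex (of degree ≤ 2) is adjacent to two distinct vertices of degree ≥ 4. -/
lemma claimB (hpc : IsProperEdgeColoring H c)
    (hnr : ¬ HasRainbowCopy H c (SimpleGraph.pathGraph 5))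
    (hT : ∀ {x y z : V}, H.Adj x y → H.Adj y z → H.Adj x z → False)
    (hK : ∀ {u u' w₁ w₂ w₃ : V}, u ≠ u' → w₁ ≠ w₂ → w₁ ≠ w₃ → w₂ ≠ w₃ →
      H.Adj u w₁ → H.Adj u w₂ → H.Adj u w₃ → H.Adj u' w₁ → H.Adj u' w₂ → H.Adj u' w₃ → False)
    {u v w : V} (huv : H.Adj u v) (huw : H.Adj u w) (hvw : v ≠ w)
    (h4v : 4 ≤ H.degree v) (h4w : 4 ≤ H.degree w) : False := by
  obtain ⟨x1, x2, hx1, hx2, hx1u, hx2u, hx12, hc1, hc2⟩ := pick2 hpc h4v u (c s(u, w))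
  obtain ⟨y1, y2, hy1, hy2, hy1u, hy2u, hy12, hd1, hd2⟩ := pick2 hpc h4w u (c s(u, v))
  have key : ∀ x y, H.Adj v x → x ≠ u → c s(v, x) ≠ c s(u, w) →
      H.Adj w y → y ≠ u → c s(w, y) ≠ c s(u, v) → x ≠ y → c s(v, x) = c s(w, y) := by
    intro x y hx hxu hcx hy hyu hcy hxy
    rcases star' hpc hnr hT huv huw hvw hx hxu hy hyu hxy with h | h | h
    · exact absurd h hcx
    · exact absurd h hcy
    · exact h
  have hcomm : ¬ (H.Adj w x1 ∧ H.Adj w x2) := by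
    rintro ⟨ha1, ha2⟩
    exact hK hvw hx1u.symm hx2u.symm hx12 huv.symm hx1 hx2 huw.symm ha1 ha2
  by_cases hA : x1 ≠ y1 ∧ x1 ≠ y2
  · have e1 := key x1 y1 hx1 hx1u hc1 hy1 hy1u hd1 hA.1
    have e2 := key x1 y2 hx1 hx1u hc1 hy2 hy2u hd2 hA.2
    exact cinj hpc hy1 hy2 hy12 (e1.symm.trans e2)
  by_cases hB : x2 ≠ y1 ∧ x2 ≠ y2
  · have e1 := key x2 y1 hx2 hx2u hc2 hy1 hy1u hd1 hB.1
    have e2 := key x2 y2 hx2 hx2u hc2 hy2 hy2u hd2 hB.2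
    exact cinj hpc hy1 hy2 hy12 (e1.symm.trans e2)
  · have hA' : x1 = y1 ∨ x1 = y2 := by
      rcases not_and_or.mp hA with h | h
      · exact Or.inl (not_not.mp h)
      · exact Or.inr (not_not.mp h)
    have hB' : x2 = y1 ∨ x2 = y2 := by
      rcases not_and_or.mp hB with h | h
      · exact Or.inl (not_not.mp h)
      · exact Or.inr (not_not.mp h)
    apply hcomm
    constructor
    · rcases hA' with h | h
      · exact h.symm ▸ hy1
      · exact h.symm ▸ hy2
    · rcases hB' with h | h
      · exact h.symm ▸ hy1
      · exact h.symm ▸ hy2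

lemma core2 (hpc : IsProperEdgeColoring H c)
    (hnr : ¬ HasRainbowCopy H c (SimpleGraph.pathGraph 5))
    (hT : ∀ {x y z : V}, H.Adj x y → H.Adj y z → H.Adj x z → False)
    (hK : ∀ {u u' w₁ w₂ w₃ : V}, u ≠ u' → w₁ ≠ w₂ → w₁ ≠ w₃ → w₂ ≠ w₃ →
      H.Adj u w₁ → H.Adj u w₂ → H.Adj u w₃ → H.Adj u' w₁ → H.Adj u' w₂ → H.Adj u' w₃ → False)
    {v w1 w2 w3 w4 x1 x2 yg : V}
    (h12 : w1 ≠ w2) (h13 : w1 ≠ w3) (h14 : w1 ≠ w4) (h23 : w2 ≠ w3) (h24 : w2 ≠ w4)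
    (h34 : w3 ≠ w4)
    (hw1 : H.Adj v w1) (hw2 : H.Adj v w2) (hw3 : H.Adj v w3) (hw4 : H.Adj v w4)
    (hd1 : 3 ≤ H.degree w1) (hd2 : 3 ≤ H.degree w2)
    (hx1 : H.Adj w3 x1) (hx1v : x1 ≠ v) (hcx1 : c s(w3, x1) = c s(v, w1))
    (hx2 : H.Adj w3 x2) (hx2v : x2 ≠ v) (hcx2 : c s(w3, x2) = c s(v, w2))
    (hyg : H.Adj w4 yg) (hygv : yg ≠ v) (hcyg : c s(w4, yg) = c s(v, w3))
    (hygw1 : ¬ H.Adj w1 yg) : False := by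
  have s12 : c s(v, w1) ≠ c s(v, w2) := cinj hpc hw1 hw2 h12
  have s13 : c s(v, w1) ≠ c s(v, w3) := cinj hpc hw1 hw3 h13
  have s14 : c s(v, w1) ≠ c s(v, w4) := cinj hpc hw1 hw4 h14
  have s23 : c s(v, w2) ≠ c s(v, w3) := cinj hpc hw2 hw3 h23
  have s24 : c s(v, w2) ≠ c s(v, w4) := cinj hpc hw2 hw4 h24
  have s34 : c s(v, w3) ≠ c s(v, w4) := cinj hpc hw3 hw4 h34
  -- Step 1: colors at w1 lie in {φ, γ}
  have ha_colors : ∀ z, H.Adj w1 z → z ≠ v →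
      c s(w1, z) = c s(v, w4) ∨ c s(w1, z) = c s(v, w3) := by
    intro z hz hzv
    have hygz : yg ≠ z := by rintro rfl; exact hygw1 hz
    rcases star' hpc hnr hT hw4 hw1 h14.symm hyg hygv hz hzv hygz with h | h | h
    · exact absurd (hcyg.symm.trans h) s13.symm
    · exact Or.inl h
    · exact Or.inr (h.symm.trans hcyg)
  -- Step 2: get the two neighbors of w1 with colors φ, γ
  obtain ⟨z1, z2, hz1, hz2, hz1v, hz2v, hz12⟩ := two_nbrs hd1 v
  have hcz12 : c s(w1, z1) ≠ c s(w1, z2) := cinj hpc hz1 hz2 hz12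
  obtain ⟨zp, zg, hzp, hzg, hzpv, hzgv, hzpg, hczp, hczg⟩ :
      ∃ zp zg, H.Adj w1 zp ∧ H.Adj w1 zg ∧ zp ≠ v ∧ zg ≠ v ∧ zp ≠ zg ∧
        c s(w1, zp) = c s(v, w4) ∧ c s(w1, zg) = c s(v, w3) := by
    rcases ha_colors z1 hz1 hz1v with h1 | h1 <;> rcases ha_colors z2 hz2 hz2v with h2 | h2
    · exact absurd (h1.trans h2.symm) hcz12
    · exact ⟨z1, z2, hz1, hz2, hz1v, hz2v, hz12, h1, h2⟩
    · exact ⟨z2, z1, hz2, hz1, hz2v, hz1v, hz12.symm, h2, h1⟩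
    · exact absurd (h1.trans h2.symm) hcz12
  -- Step 3: constraints on colors at w2
  have hb1 : ∀ x, H.Adj w2 x → x ≠ v → x ≠ yg →
      c s(w2, x) = c s(v, w4) ∨ c s(w2, x) = c s(v, w3) := by
    intro x hx hxv hxyg
    rcases star' hpc hnr hT hw4 hw2 h24.symm hyg hygv hx hxv (Ne.symm hxyg) with h | h | h
    · exact absurd (hcyg.symm.trans h) s23.symm
    · exact Or.inl h
    · exact Or.inr (h.symm.trans hcyg)
  have hb2 : ∀ x, H.Adj w2 x → x ≠ v → x ≠ zp →
      c s(w2, x) = c s(v, w1) ∨ c s(w2, x) = c s(v, w4) := by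
    intro x hx hxv hxzp
    rcases star' hpc hnr hT hw1 hw2 h12 hzp hzpv hx hxv (Ne.symm hxzp) with h | h | h
    · exact absurd (hczp.symm.trans h) s24.symm
    · exact Or.inl h
    · exact Or.inr (h.symm.trans hczp)
  have hb3 : ∀ x, H.Adj w2 x → x ≠ v → x ≠ zg →
      c s(w2, x) = c s(v, w1) ∨ c s(w2, x) = c s(v, w3) := by
    intro x hx hxv hxzg
    rcases star' hpc hnr hT hw1 hw2 h12 hzg hzgv hx hxv (Ne.symm hxzg) with h | h | h
    · exact absurd (hczg.symm.trans h) s23.symm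
    · exact Or.inl h
    · exact Or.inr (h.symm.trans hczg)
  -- Step 4: the only possible neighbors of w2
  have hmem : ∀ x, H.Adj w2 x → x ≠ v → x = yg ∨ x = zp ∨ x = zg := by
    intro x hx hxv
    by_contra hcon
    push_neg at hcon
    obtain ⟨hxyg, hxzp, hxzg⟩ := hcon
    rcases hb1 x hx hxv hxyg with h1 | h1 <;> rcases hb2 x hx hxv hxzp with h2 | h2 <;>
      rcases hb3 x hx hxv hxzg with h3 | h3 <;>
      first
        | exact s14 (h2.symm.trans h1)
        | exact s13 (h2.symm.trans h1)
        | exact s14 (h3.symm.trans h1)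
        | exact s13 (h3.symm.trans h1)
        | exact s34 (h3.symm.trans h1)
        | exact s34 (h1.symm.trans h2)
  -- Step 5
  have hygzp : yg ≠ zp := by rintro rfl; exact hygw1 hzp
  have hygzg : yg ≠ zg := by rintro rfl; exact hygw1 hzg
  -- Step 6
  obtain ⟨t1, t2, ht1, ht2, ht1v, ht2v, ht12⟩ := two_nbrs hd2 v
  have hnotzz : ¬ (H.Adj w2 zp ∧ H.Adj w2 zg) := by
    rintro ⟨hb, hb'⟩
    exact hK h12 hzpv.symm hzgv.symm hzpg hw1.symm hzp hzg hw2.symm hb hb'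
  obtain ⟨hygb, t, ht, htz⟩ : H.Adj w2 yg ∧ ∃ t, H.Adj w2 t ∧ (t = zp ∨ t = zg) := by
    rcases hmem t1 ht1 ht1v with h1 | h1 | h1 <;> rcases hmem t2 ht2 ht2v with h2 | h2 | h2
    · exact absurd (h1.trans h2.symm) ht12
    · exact ⟨h1 ▸ ht1, zp, h2 ▸ ht2, Or.inl rfl⟩
    · exact ⟨h1 ▸ ht1, zg, h2 ▸ ht2, Or.inr rfl⟩
    · exact ⟨h2 ▸ ht2, zp, h1 ▸ ht1, Or.inl rfl⟩
    · exact absurd (h1.trans h2.symm) ht12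
    · exact absurd ⟨h1 ▸ ht1, h2 ▸ ht2⟩ hnotzz
    · exact ⟨h2 ▸ ht2, zg, h1 ▸ ht1, Or.inr rfl⟩
    · exact absurd ⟨h2 ▸ ht2, h1 ▸ ht1⟩ hnotzz
    · exact absurd (h1.trans h2.symm) ht12
  rcases htz with h | h
  · -- t = zp
    have hbzp : H.Adj w2 zp := h ▸ ht
    have hzpx2 : zp = x2 := by
      by_contra hne
      rcases star' hpc hnr hT hw1 hw3 h13 hzp hzpv hx2 hx2v hne with h' | h' | h'
      · exact s34.symm (hczp.symm.trans h')
      · exact s12.symm (hcx2.symm.trans h')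
      · exact s24.symm (hczp.symm.trans (h'.trans hcx2))
    have hzpw3 : H.Adj zp w3 := by rw [hzpx2]; exact hx2.symm
    exact hK (Ne.symm hzpv) h12 h13 h23 hw1 hw2 hw3 hzp.symm hbzp.symm hzpw3
  · -- t = zg
    have hbzg : H.Adj w2 zg := h ▸ ht
    have hczg2 : c s(w2, zg) = c s(v, w4) := by
      rcases hb1 zg hbzg hzgv (Ne.symm hygzg) with h' | h'
      · exact h'
      · exfalso
        have e1 : s(zg, w1) = s(w1, zg) := Sym2.eq_swap
        have e2 : s(zg, w2) = s(w2, zg) := Sym2.eq_swap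
        have hne := cinj hpc hzg.symm hbzg.symm h12
        rw [e1, e2] at hne
        exact hne (hczg.trans h'.symm)
    have hzgx1 : zg ≠ x1 := by
      intro hh
      have hzgw3 : H.Adj zg w3 := by rw [hh]; exact hx1.symm
      exact hK (Ne.symm hzgv) h12 h13 h23 hw1 hw2 hw3 hzg.symm hbzg.symm hzgw3
    rcases star' hpc hnr hT hw2 hw3 h23 hbzg hzgv hx1 hx1v hzgx1 with h' | h' | h'
    · exact s34.symm (hczg2.symm.trans h')
    · exact s12 (hcx1.symm.trans h')
    · exact s14.symm (hczg2.symm.trans (h'.trans hcx1))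

lemma core (hpc : IsProperEdgeColoring H c)
    (hnr : ¬ HasRainbowCopy H c (SimpleGraph.pathGraph 5))
    (hT : ∀ {x y z : V}, H.Adj x y → H.Adj y z → H.Adj x z → False)
    (hK : ∀ {u u' w₁ w₂ w₃ : V}, u ≠ u' → w₁ ≠ w₂ → w₁ ≠ w₃ → w₂ ≠ w₃ →
      H.Adj u w₁ → H.Adj u w₂ → H.Adj u w₃ → H.Adj u' w₁ → H.Adj u' w₂ → H.Adj u' w₃ → False)
    {v w1 w2 w3 w4 x1 x2 : V}
    (h12 : w1 ≠ w2) (h13 : w1 ≠ w3) (h14 : w1 ≠ w4) (h23 : w2 ≠ w3) (h24 : w2 ≠ w4)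
    (h34 : w3 ≠ w4)
    (hw1 : H.Adj v w1) (hw2 : H.Adj v w2) (hw3 : H.Adj v w3) (hw4 : H.Adj v w4)
    (hd1 : 3 ≤ H.degree w1) (hd2 : 3 ≤ H.degree w2) (hd4 : 3 ≤ H.degree w4)
    (hx1 : H.Adj w3 x1) (hx1v : x1 ≠ v) (hcx1 : c s(w3, x1) = c s(v, w1))
    (hx2 : H.Adj w3 x2) (hx2v : x2 ≠ v) (hcx2 : c s(w3, x2) = c s(v, w2)) : False := by
  have s12 : c s(v, w1) ≠ c s(v, w2) := cinj hpc hw1 hw2 h12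
  have s14 : c s(v, w1) ≠ c s(v, w4) := cinj hpc hw1 hw4 h14
  have s24 : c s(v, w2) ≠ c s(v, w4) := cinj hpc hw2 hw4 h24
  have hx12 : x1 ≠ x2 := by
    intro h
    exact s12 (hcx1.symm.trans (h ▸ hcx2))
  obtain ⟨y1, y2, hy1, hy2, hy1v, hy2v, hy12⟩ := two_nbrs hd4 v
  obtain ⟨y, hy, hyv, hyx1, hyx2⟩ : ∃ y, H.Adj w4 y ∧ y ≠ v ∧ y ≠ x1 ∧ y ≠ x2 := by
    by_cases hA : y1 ≠ x1 ∧ y1 ≠ x2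
    · exact ⟨y1, hy1, hy1v, hA.1, hA.2⟩
    by_cases hB : y2 ≠ x1 ∧ y2 ≠ x2
    · exact ⟨y2, hy2, hy2v, hB.1, hB.2⟩
    · exfalso
      have hA' : y1 = x1 ∨ y1 = x2 := by
        rcases not_and_or.mp hA with h | h
        · exact Or.inl (not_not.mp h)
        · exact Or.inr (not_not.mp h)
      have hB' : y2 = x1 ∨ y2 = x2 := by
        rcases not_and_or.mp hB with h | h
        · exact Or.inl (not_not.mp h)
        · exact Or.inr (not_not.mp h)
      have hax : H.Adj w4 x1 ∧ H.Adj w4 x2 := by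
        rcases hA' with h | h <;> rcases hB' with h' | h'
        · exact absurd (h.trans h'.symm) hy12
        · exact ⟨h ▸ hy1, h' ▸ hy2⟩
        · exact ⟨h' ▸ hy2, h ▸ hy1⟩
        · exact absurd (h.trans h'.symm) hy12
      exact hK h34 hx1v.symm hx2v.symm hx12 hw3.symm hx1 hx2 hw4.symm hax.1 hax.2
  have hcy : c s(w4, y) = c s(v, w3) := by
    rcases star' hpc hnr hT hw3 hw4 h34 hx1 hx1v hy hyv (Ne.symm hyx1) with h | h | h
    · exact absurd (hcx1.symm.trans h) s14
    · exact h
    · rcases star' hpc hnr hT hw3 hw4 h34 hx2 hx2v hy hyv (Ne.symm hyx2) with h' | h' | h'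
      · exact absurd (hcx2.symm.trans h') s24
      · exact h'
      · exact absurd ((hcx1.symm.trans h).trans (hcx2.symm.trans h').symm) s12
  have hnadj : ¬ (H.Adj w1 y ∧ H.Adj w2 y) := by
    rintro ⟨ha, hb⟩
    exact hK (Ne.symm hyv) h12 h14 h24 hw1 hw2 hw4 ha.symm hb.symm hy.symm
  rcases not_and_or.mp hnadj with hna | hnb
  · exact core2 hpc hnr hT hK h12 h13 h14 h23 h24 h34 hw1 hw2 hw3 hw4 hd1 hd2
      hx1 hx1v hcx1 hx2 hx2v hcx2 hy hyv hcy hna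
  · exact core2 hpc hnr hT hK h12.symm h23 h24 h13 h14 h34 hw2 hw1 hw3 hw4 hd2 hd1
      hx2 hx2v hcx2 hx1 hx1v hcx1 hy hyv hcy hnb

/-- No vertex has four distinct neighbors all of degree at least 3. -/
lemma claimA (hpc : IsProperEdgeColoring H c)
    (hnr : ¬ HasRainbowCopy H c (SimpleGraph.pathGraph 5))
    (hT : ∀ {x y z : V}, H.Adj x y → H.Adj y z → H.Adj x z → False)
    (hK : ∀ {u u' w₁ w₂ w₃ : V}, u ≠ u' → w₁ ≠ w₂ → w₁ ≠ w₃ → w₂ ≠ w₃ →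
      H.Adj u w₁ → H.Adj u w₂ → H.Adj u w₃ → H.Adj u' w₁ → H.Adj u' w₂ → H.Adj u' w₃ → False)
    {v a b d f : V}
    (hab : a ≠ b) (had : a ≠ d) (haf : a ≠ f) (hbd : b ≠ d) (hbf : b ≠ f) (hdf : d ≠ f)
    (hva : H.Adj v a) (hvb : H.Adj v b) (hvd : H.Adj v d) (hvf : H.Adj v f)
    (hda : 3 ≤ H.degree a) (hdb : 3 ≤ H.degree b) (hdd : 3 ≤ H.degree d)
    (hdf' : 3 ≤ H.degree f) : False := by
  have C : ∀ {p q r t : V}, p ≠ q → p ≠ r → p ≠ t → q ≠ r → q ≠ t → r ≠ t →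
      H.Adj v p → H.Adj v q → H.Adj v r → H.Adj v t →
      3 ≤ H.degree p → 3 ≤ H.degree q → 3 ≤ H.degree t →
      (∃ x, H.Adj r x ∧ x ≠ v ∧ c s(r, x) = c s(v, p)) →
      (∃ x, H.Adj r x ∧ x ≠ v ∧ c s(r, x) = c s(v, q)) → False := by
    intro p q r t hpq hpr hpt hqr hqt hrt hp hq hr ht hdp hdq hdt h1 h2
    obtain ⟨xp, hxp, hxpv, hcp⟩ := h1
    obtain ⟨xq, hxq, hxqv, hcq⟩ := h2
    exact core hpc hnr hT hK hpq hpr hpt hqr hqt hrt hp hq hr ht hdp hdq hdt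
      hxp hxpv hcp hxq hxqv hcq
  rcases L1 hpc hnr hT hK hva hvd had hda hdd with had1 | had1 <;>
    rcases L1 hpc hnr hT hK hvb hvd hbd hdb hdd with hbd1 | hbd1
  · -- a→d, b→d
    exact C hab had haf hbd hbf hdf hva hvb hvd hvf hda hdb hdf' had1 hbd1
  · -- a→d, d→b
    rcases L1 hpc hnr hT hK hva hvb hab hda hdb with h3 | h3
    · -- a→b : heads b : {d, a}
      exact C had.symm hbd.symm hdf hab haf hbf hvd hva hvb hvf hdd hda hdf' hbd1 h3
    · -- b→a
      rcases L1 hpc hnr hT hK hvf hva haf.symm hdf' hda with h4 | h4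
      · -- f→a : heads a : {b, f}
        exact C hbf hab.symm hbd haf.symm hdf.symm had hvb hvf hva hvd hdb hdf' hdd h3 h4
      · -- a→f
        rcases L1 hpc hnr hT hK hvb hvf hbf hdb hdf' with h5 | h5
        · -- b→f : heads f : {a, b}
          exact C hab haf had hbf hbd hdf.symm hva hvb hvf hvd hda hdb hdd h4 h5
        · -- f→b : heads b : {d, f}
          exact C hdf hbd.symm had.symm hbf.symm haf.symm hab.symm hvd hvf hvb hva
            hdd hdf' hda hbd1 h5
  · -- d→a, b→d
    rcases L1 hpc hnr hT hK hva hvb hab hda hdb with h3 | h3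
    · -- a→b
      rcases L1 hpc hnr hT hK hvf hvb hbf.symm hdf' hdb with h4 | h4
      · -- f→b : heads b : {a, f}
        exact C haf hab had hbf.symm hdf.symm hbd hva hvf hvb hvd hda hdf' hdd h3 h4
      · -- b→f
        rcases L1 hpc hnr hT hK hvf hva haf.symm hdf' hda with h5 | h5
        · -- f→a : heads a : {d, f}
          exact C hdf had.symm hbd.symm haf.symm hbf.symm hab hvd hvf hva hvb
            hdd hdf' hdb had1 h5
        · -- a→f : heads f : {a, b}
          exact C hab haf had hbf hbd hdf.symm hva hvb hvf hvd hda hdb hdd h5 h4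
    · -- b→a : heads a : {d, b}
      exact C hbd.symm had.symm hdf hab.symm hbf haf hvd hvb hva hvf hdd hdb hdf' had1 h3
  · -- d→a, d→b
    rcases L1 hpc hnr hT hK hva hvb hab hda hdb with h3 | h3
    · -- a→b : heads b : {d, a}
      exact C had.symm hbd.symm hdf hab haf hbf hvd hva hvb hvf hdd hda hdf' hbd1 h3
    · -- b→a : heads a : {d, b}
      exact C hbd.symm had.symm hdf hab.symm hbf haf hvd hvb hva hvf hdd hdb hdf' had1 h3

/-- The degree-sum bound derived from the two structural claims. -/
lemma counting
    (hA : ∀ v : V, 4 ≤ H.degree v →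
      ((H.neighborFinset v).filter (fun u => 3 ≤ H.degree u)).card ≤ 3)
    (hB : ∀ u : V, H.degree u ≤ 2 →
      ((H.neighborFinset u).filter (fun w => 4 ≤ H.degree w)).card ≤ 1) :
    ∑ v : V, H.degree v ≤ 3 * Fintype.card V := by
  classical
  set Bs := Finset.univ.filter (fun v : V => 4 ≤ H.degree v) with hBs
  set Rs := Finset.univ.filter (fun v : V => ¬ 4 ≤ H.degree v) with hRs
  set Ss := Rs.filter (fun v : V => H.degree v ≤ 2) with hSs
  set Ms := Rs.filter (fun v : V => ¬ H.degree v ≤ 2) with hMs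
  set P := (Finset.univ ×ˢ Finset.univ).filter
    (fun p : V × V => 4 ≤ H.degree p.1 ∧ H.Adj p.1 p.2 ∧ H.degree p.2 ≤ 2) with hP
  -- fiber over the first coordinate
  have hT1 : ∑ v ∈ Bs, (H.degree v - 3) ≤ P.card := by
    rw [Finset.card_eq_sum_card_fiberwise
      (f := fun p : V × V => p.1) (t := Bs) (by
        intro p hp
        rw [hP, Finset.mem_coe, Finset.mem_filter] at hp
        rw [hBs, Finset.mem_coe, Finset.mem_filter]
        exact ⟨Finset.mem_univ _, hp.2.1⟩)]
    apply Finset.sum_le_sum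
    intro v hv
    rw [hBs, Finset.mem_filter] at hv
    have hfib : ((H.neighborFinset v).filter (fun u => H.degree u ≤ 2)).image
        (fun u => (v, u)) ⊆ P.filter (fun p => p.1 = v) := by
      intro p hp
      rw [Finset.mem_image] at hp
      obtain ⟨u, hu, rfl⟩ := hp
      rw [Finset.mem_filter, SimpleGraph.mem_neighborFinset] at hu
      rw [Finset.mem_filter, hP, Finset.mem_filter]
      exact ⟨⟨Finset.mem_product.mpr ⟨Finset.mem_univ _, Finset.mem_univ _⟩, hv.2, hu.1, hu.2⟩, rfl⟩
    have hcard : ((H.neighborFinset v).filter (fun u => H.degree u ≤ 2)).card ≤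
        (P.filter (fun p => p.1 = v)).card := by
      calc ((H.neighborFinset v).filter (fun u => H.degree u ≤ 2)).card
          = (((H.neighborFinset v).filter (fun u => H.degree u ≤ 2)).image
              (fun u => (v, u))).card := by
            rw [Finset.card_image_of_injective _ (fun x y h => (Prod.mk.injEq _ _ _ _).mp h |>.2)]
        _ ≤ _ := Finset.card_le_card hfib
    have hsplit := Finset.card_filter_add_card_filter_not
      (s := H.neighborFinset v) (p := fun u => H.degree u ≤ 2)
    have hge3 : ((H.neighborFinset v).filter (fun u => ¬ H.degree u ≤ 2)).card ≤ 3 := by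
      have : ((H.neighborFinset v).filter (fun u => ¬ H.degree u ≤ 2)) =
          ((H.neighborFinset v).filter (fun u => 3 ≤ H.degree u)) := by
        apply Finset.filter_congr
        intro u _
        omega
      rw [this]
      exact hA v hv.2
    have hdeg : H.degree v = (H.neighborFinset v).card := (H.card_neighborFinset_eq_degree v).symm
    omega
  -- fiber over the second coordinate
  have hT2 : P.card ≤ (Ss.filter (fun u => 1 ≤ H.degree u)).card := by
    rw [Finset.card_eq_sum_card_fiberwise
      (f := fun p : V × V => p.2) (t := Ss.filter (fun u => 1 ≤ H.degree u)) (by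
        intro p hp
        dsimp only
        rw [hP, Finset.mem_coe, Finset.mem_filter] at hp
        rw [Finset.mem_coe, Finset.mem_filter, hSs, Finset.mem_filter, hRs, Finset.mem_filter]
        refine ⟨⟨⟨Finset.mem_univ _, by omega⟩, hp.2.2.2⟩, ?_⟩
        have : 0 < H.degree p.2 := by
          rw [H.degree_pos_iff_exists_adj]
          exact ⟨p.1, hp.2.2.1.symm⟩
        omega)]
    have : ∀ u ∈ Ss.filter (fun u => 1 ≤ H.degree u),
        (P.filter (fun p => p.2 = u)).card ≤ 1 := by
      intro u hu
      rw [Finset.mem_filter, hSs, Finset.mem_filter] at hu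
      have hsub : P.filter (fun p => p.2 = u) ⊆
          ((H.neighborFinset u).filter (fun w => 4 ≤ H.degree w)).image (fun w => (w, u)) := by
        intro p hp
        rw [Finset.mem_filter, hP, Finset.mem_filter] at hp
        obtain ⟨⟨-, h4, hadj, -⟩, h2⟩ := hp
        rw [Finset.mem_image]
        exact ⟨p.1, by
          rw [Finset.mem_filter, SimpleGraph.mem_neighborFinset]
          exact ⟨(h2 ▸ hadj).symm, h4⟩, by rw [← h2]⟩
      calc (P.filter (fun p => p.2 = u)).card
          ≤ (((H.neighborFinset u).filter (fun w => 4 ≤ H.degree w)).image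
              (fun w => (w, u))).card := Finset.card_le_card hsub
        _ ≤ ((H.neighborFinset u).filter (fun w => 4 ≤ H.degree w)).card :=
            Finset.card_image_le
        _ ≤ 1 := hB u hu.1.2
    calc ∑ u ∈ Ss.filter (fun u => 1 ≤ H.degree u), (P.filter (fun p => p.2 = u)).card
        ≤ ∑ u ∈ Ss.filter (fun u => 1 ≤ H.degree u), 1 := Finset.sum_le_sum this
      _ = _ := by rw [Finset.sum_const, smul_eq_mul, mul_one]
  -- partition of the vertex set
  have hpart1 : Bs.card + Rs.card = Fintype.card V := by
    rw [hBs, hRs, Finset.card_filter_add_card_filter_not, Finset.card_univ]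
  have hpart2 : Ss.card + Ms.card = Rs.card := by
    rw [hSs, hMs, Finset.card_filter_add_card_filter_not]
  -- sum splitting
  have hsum1 : ∑ v : V, H.degree v = ∑ v ∈ Bs, H.degree v + ∑ v ∈ Rs, H.degree v := by
    rw [hBs, hRs, Finset.sum_filter_add_sum_filter_not]
  have hsum2 : ∑ v ∈ Rs, H.degree v = ∑ v ∈ Ss, H.degree v + ∑ v ∈ Ms, H.degree v := by
    rw [hSs, hMs, Finset.sum_filter_add_sum_filter_not]
  -- bounds on the three pieces
  have hb1 : ∑ v ∈ Bs, H.degree v ≤ 3 * Bs.card + ∑ v ∈ Bs, (H.degree v - 3) := by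
    have : ∑ v ∈ Bs, H.degree v ≤ ∑ v ∈ Bs, (3 + (H.degree v - 3)) := by
      apply Finset.sum_le_sum
      intro v hv
      rw [hBs, Finset.mem_filter] at hv
      omega
    calc ∑ v ∈ Bs, H.degree v ≤ ∑ v ∈ Bs, (3 + (H.degree v - 3)) := this
      _ = 3 * Bs.card + ∑ v ∈ Bs, (H.degree v - 3) := by
          rw [Finset.sum_add_distrib, Finset.sum_const, smul_eq_mul, mul_comm]
  have hb2 : ∑ v ∈ Ms, H.degree v ≤ 3 * Ms.card := by
    have : ∑ v ∈ Ms, H.degree v ≤ ∑ _v ∈ Ms, 3 := by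
      apply Finset.sum_le_sum
      intro v hv
      rw [hMs, Finset.mem_filter, hRs, Finset.mem_filter] at hv
      omega
    simpa [mul_comm] using this
  have hb3 : ∑ v ∈ Ss, H.degree v + (Ss.filter (fun u => 1 ≤ H.degree u)).card
      ≤ 3 * Ss.card := by
    rw [Finset.card_filter]
    rw [← Finset.sum_add_distrib]
    have : ∀ v ∈ Ss, H.degree v + (if 1 ≤ H.degree v then 1 else 0) ≤ 3 := by
      intro v hv
      rw [hSs, Finset.mem_filter] at hv
      split_ifs <;> omega
    calc ∑ v ∈ Ss, (H.degree v + if 1 ≤ H.degree v then 1 else 0)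
        ≤ ∑ _v ∈ Ss, 3 := Finset.sum_le_sum this
      _ = 3 * Ss.card := by rw [Finset.sum_const, smul_eq_mul, mul_comm]
  omega

end RB

section Assembly

variable {V : Type*} [Fintype V]

lemma key_bound (G : SimpleGraph V)
    (h3 : ¬ ContainsCopy G (⊤ : SimpleGraph (Fin 3)))
    (h23 : ¬ ContainsCopy G (completeBipartiteGraph (Fin 2) (Fin 3)))
    {H : SimpleGraph V} (hle : H ≤ G) (hrf : RainbowFree H (SimpleGraph.pathGraph 5)) :
    2 * H.edgeSet.ncard ≤ 3 * Fintype.card V := by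
  classical
  obtain ⟨c, hpc, hnr⟩ := hrf
  have hT : ∀ {x y z : V}, H.Adj x y → H.Adj y z → H.Adj x z → False := by
    intro x y z hxy hyz hxz
    apply h3
    have gxy := hle hxy
    have gyz := hle hyz
    have gxz := hle hxz
    refine ⟨⟨![x, y, z], ?_⟩, ?_⟩
    · intro i j hij
      fin_cases i <;> fin_cases j <;>
        first
          | rfl
          | exact absurd hij hxy.ne | exact absurd hij hxy.ne.symm
          | exact absurd hij hyz.ne | exact absurd hij hyz.ne.symm
          | exact absurd hij hxz.ne | exact absurd hij hxz.ne.symm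
    · intro i j hij
      rw [SimpleGraph.top_adj] at hij
      fin_cases i <;> fin_cases j <;>
        first
          | exact absurd rfl hij
          | exact gxy | exact gxy.symm | exact gyz | exact gyz.symm
          | exact gxz | exact gxz.symm
  have hK : ∀ {u u' w₁ w₂ w₃ : V}, u ≠ u' → w₁ ≠ w₂ → w₁ ≠ w₃ → w₂ ≠ w₃ →
      H.Adj u w₁ → H.Adj u w₂ → H.Adj u w₃ → H.Adj u' w₁ → H.Adj u' w₂ → H.Adj u' w₃ →
      False := by
    intro u u' w1 w2 w3 huu' h12 h13 h23' a1 a2 a3 b1 b2 b3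
    apply h23
    refine ⟨⟨Sum.elim ![u, u'] ![w1, w2, w3], ?_⟩, ?_⟩
    · rintro (i | i) (j | j) hij
      · simp only [Sum.elim_inl] at hij
        congr 1
        fin_cases i <;> fin_cases j <;>
          first
            | rfl
            | exact absurd hij huu' | exact absurd hij huu'.symm
      · exfalso
        simp only [Sum.elim_inl, Sum.elim_inr] at hij
        fin_cases i <;> fin_cases j <;>
          first
            | exact absurd hij (hle a1).ne | exact absurd hij (hle a2).ne
            | exact absurd hij (hle a3).ne | exact absurd hij (hle b1).ne
            | exact absurd hij (hle b2).ne | exact absurd hij (hle b3).ne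
      · exfalso
        simp only [Sum.elim_inl, Sum.elim_inr] at hij
        fin_cases i <;> fin_cases j <;>
          first
            | exact absurd hij.symm (hle a1).ne | exact absurd hij.symm (hle a2).ne
            | exact absurd hij.symm (hle a3).ne | exact absurd hij.symm (hle b1).ne
            | exact absurd hij.symm (hle b2).ne | exact absurd hij.symm (hle b3).ne
      · simp only [Sum.elim_inr] at hij
        congr 1
        fin_cases i <;> fin_cases j <;>
          first
            | rfl
            | exact absurd hij h12 | exact absurd hij h12.symm
            | exact absurd hij h13 | exact absurd hij h13.symm
            | exact absurd hij h23' | exact absurd hij h23'.symm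
    · rintro (i | i) (j | j) hab <;>
        simp only [completeBipartiteGraph_adj, Sum.isLeft_inl, Sum.isRight_inr,
          Sum.isRight_inl, Sum.isLeft_inr, Sum.elim_inl, Sum.elim_inr] at hab ⊢ <;>
        [skip; skip; skip; skip]
      · exact absurd hab (by simp)
      · fin_cases i <;> fin_cases j <;>
          first
            | exact hle a1 | exact hle a2 | exact hle a3
            | exact hle b1 | exact hle b2 | exact hle b3
      · fin_cases i <;> fin_cases j <;>
          first
            | exact (hle a1).symm | exact (hle a2).symm | exact (hle a3).symm
            | exact (hle b1).symm | exact (hle b2).symm | exact (hle b3).symm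
      · exact absurd hab (by simp)
  have hA : ∀ v : V, 4 ≤ H.degree v →
      ((H.neighborFinset v).filter (fun u => 3 ≤ H.degree u)).card ≤ 3 := by
    intro v _
    by_contra hc
    push_neg at hc
    set s := (H.neighborFinset v).filter (fun u => 3 ≤ H.degree u) with hs
    obtain ⟨a, ha⟩ := Finset.card_pos.mp (show 0 < s.card by omega)
    have h1 : 0 < (s.erase a).card := by rw [Finset.card_erase_of_mem ha]; omega
    obtain ⟨b, hb⟩ := Finset.card_pos.mp h1
    have h2 : 0 < ((s.erase a).erase b).card := by
      rw [Finset.card_erase_of_mem hb, Finset.card_erase_of_mem ha]; omega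
    obtain ⟨d, hd⟩ := Finset.card_pos.mp h2
    have h3' : 0 < (((s.erase a).erase b).erase d).card := by
      rw [Finset.card_erase_of_mem hd, Finset.card_erase_of_mem hb,
        Finset.card_erase_of_mem ha]; omega
    obtain ⟨f, hf⟩ := Finset.card_pos.mp h3'
    rw [Finset.mem_erase] at hb
    rw [Finset.mem_erase, Finset.mem_erase] at hd
    rw [Finset.mem_erase, Finset.mem_erase, Finset.mem_erase] at hf
    have hmem : ∀ x, x ∈ s → H.Adj v x ∧ 3 ≤ H.degree x := by
      intro x hx
      rw [hs, Finset.mem_filter, SimpleGraph.mem_neighborFinset] at hx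
      exact hx
    obtain ⟨hva, hda⟩ := hmem a ha
    obtain ⟨hvb, hdb⟩ := hmem b hb.2
    obtain ⟨hvd, hdd⟩ := hmem d hd.2.2
    obtain ⟨hvf, hdf⟩ := hmem f hf.2.2.2
    exact claimA hpc hnr hT hK (Ne.symm hb.1) (Ne.symm hd.2.1) (Ne.symm hf.2.2.1)
      (Ne.symm hd.1) (Ne.symm hf.2.1) (Ne.symm hf.1) hva hvb hvd hvf hda hdb hdd hdf
  have hB : ∀ u : V, H.degree u ≤ 2 →
      ((H.neighborFinset u).filter (fun w => 4 ≤ H.degree w)).card ≤ 1 := by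
    intro u _
    by_contra hc
    push_neg at hc
    obtain ⟨x, hx, y, hy, hxy⟩ := Finset.one_lt_card.mp hc
    rw [Finset.mem_filter, SimpleGraph.mem_neighborFinset] at hx hy
    exact claimB hpc hnr hT hK hx.1 hy.1 hxy hx.2 hy.2
  have hsum := counting hA hB
  have htwice := SimpleGraph.sum_degrees_eq_twice_card_edges H
  have hncard : H.edgeSet.ncard = H.edgeFinset.card := by
    rw [SimpleGraph.edgeFinset, Set.ncard_eq_toFinset_card']
  omega

end Assembly

/-- If `G` contains no `K_3` and no `K_{2,3}` as a subgraph, then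
`2 · ex*(G, P_4) ≤ 3 · |V(G)|`. -/
theorem stmt16 {V : Type*} [Fintype V] (G : SimpleGraph V)
    (h3 : ¬ ContainsCopy G (⊤ : SimpleGraph (Fin 3)))
    (h23 : ¬ ContainsCopy G (completeBipartiteGraph (Fin 2) (Fin 3))) :
    2 * rainbowExtremalNumber G (SimpleGraph.pathGraph 5) ≤ 3 * Fintype.card V := by
  classical
  have hne : {m | ∃ H : SimpleGraph V, H ≤ G ∧ RainbowFree H (SimpleGraph.pathGraph 5) ∧
      m = H.edgeSet.ncard}.Nonempty := by
    refine ⟨0, ⊥, bot_le, ⟨fun _ => 0, ?_, ?_⟩, ?_⟩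
    · intro e he
      rw [SimpleGraph.edgeSet_bot] at he
      exact absurd he (Set.notMem_empty _)
    · rintro ⟨f, hf, -⟩
      have hadj : (SimpleGraph.pathGraph 5).Adj 0 1 := by
        rw [SimpleGraph.pathGraph_adj]
        left
        rfl
      exact hf hadj
    · rw [SimpleGraph.edgeSet_bot, Set.ncard_empty]
  have hbdd : BddAbove {m | ∃ H : SimpleGraph V, H ≤ G ∧
      RainbowFree H (SimpleGraph.pathGraph 5) ∧ m = H.edgeSet.ncard} := by
    refine ⟨Fintype.card (Sym2 V), ?_⟩
    rintro m ⟨H, -, -, rfl⟩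
    have h := Set.ncard_le_ncard (Set.subset_univ H.edgeSet) Set.finite_univ
    rwa [Set.ncard_univ, Nat.card_eq_fintype_card] at h
  have hmem := Nat.sSup_mem hne hbdd
  obtain ⟨H, hle, hrf, hm⟩ := hmem
  rw [rainbowExtremalNumber, hm]
  exact key_bound G h3 h23 hle hrf
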